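/- Let C be a nondegenerate linear [n,k] code of locality r with k > r. Then the (k-r)-th generalized Hamming weight satisfies d_{k-r} ≤ n - r - 1. -/

import Mathlib

/-- Locality `r`: every coordinate `i` has a recovery set `R` with `i ∉ R`,
`#R ≤ r`, such that codewords agreeing on `R` agree at `i`. -/
def HasLocality {F : Type*} [Field F] {n : ℕ} (C : Submodule F (Fin n → F)) (r : ℕ) : Prop :=
  ∀ i : Fin n, ∃ R : Finset (Fin n), i ∉ R ∧ R.card ≤ r ∧
    ∀ u ∈ C, ∀ v ∈ C, (∀ j ∈ R, u j = v j) → u i = v i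

/-- The `t`-th generalized Hamming weight of a linear code `C`. -/
noncomputable def gweight {F : Type*} [Field F] {n : ℕ}
    (C : Submodule F (Fin n → F)) (t : ℕ) : ℕ :=
  sInf { w | ∃ E : Submodule F (Fin n → F), E ≤ C ∧ Module.finrank F E = t ∧
    {i | ∃ v ∈ E, v i ≠ 0}.ncard = w }

set_option maxHeartbeats 1000000 in
set_option synthInstance.maxHeartbeats 200000 in
theorem gweight_k_sub_r_le
    {F : Type*} [Field F] {n k r : ℕ}
    (C : Submodule F (Fin n → F))
    (hk : Module.finrank F C = k)
    (hnondeg : ∀ i : Fin n, ∃ v ∈ C, v i ≠ 0)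
    (hr1 : 1 ≤ r) (hkr : r < k) (hloc : HasLocality C r) :
    gweight C (k - r) + r + 1 ≤ n := by
  have hkn : k ≤ n := by
    have := Submodule.finrank_le C
    rwa [hk, Module.finrank_fin_fun] at this
  have hn : 0 < n := by omega
  set i : Fin n := ⟨0, hn⟩ with hi
  obtain ⟨R, hiR, hRr, hRec⟩ := hloc i
  -- pad R to R' of card exactly r, avoiding i
  have hRsub : R ⊆ ({i}ᶜ : Finset (Fin n)) := fun j hj => by
    simp only [Finset.mem_compl, Finset.mem_singleton]
    rintro rfl; exact hiR hj
  have hcardc : r ≤ ({i}ᶜ : Finset (Fin n)).card := by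
    rw [Finset.card_compl, Finset.card_singleton, Fintype.card_fin]; omega
  obtain ⟨R', hRR', hR'c, hR'card⟩ := Finset.exists_subsuperset_card_eq hRsub hRr hcardc
  have hiR' : i ∉ R' := fun h => by simpa using hR'c h
  -- projection onto R'
  set φ : (Fin n → F) →ₗ[F] (↥R' → F) :=
    LinearMap.pi (fun j : ↥R' => LinearMap.proj (j : Fin n)) with hφ
  set ψ : ↥C →ₗ[F] (↥R' → F) := φ.domRestrict C with hψ
  -- kernel dimension
  have hrange : Module.finrank F (LinearMap.range ψ) ≤ r := by
    calc Module.finrank F (LinearMap.range ψ) ≤ Module.finrank F (↥R' → F) :=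
      Submodule.finrank_le _
    _ = R'.card := by
        rw [Module.finrank_fintype_fun_eq_card, Fintype.card_coe]
    _ = r := hR'card
  have hrn : Module.finrank F (LinearMap.range ψ) + Module.finrank F (LinearMap.ker ψ) = k := by
    rw [LinearMap.finrank_range_add_finrank_ker, hk]
  have hkerge : k - r ≤ Module.finrank F (LinearMap.ker ψ) := by omega
  -- get a (k-r)-dimensional subspace of the kernel
  obtain ⟨f, hf⟩ := exists_linearIndependent_of_le_finrank hkerge
  set g : Fin (k - r) → (Fin n → F) := fun m => ((f m : ↥C) : Fin n → F) with hg
  have hginj : LinearIndependent F g := by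
    have h1 : LinearIndependent F (fun m => (f m : ↥C)) :=
      hf.map_injOn (LinearMap.ker ψ).subtype Subtype.val_injective.injOn
    exact h1.map_injOn C.subtype Subtype.val_injective.injOn
  set E : Submodule F (Fin n → F) := Submodule.span F (Set.range g) with hE
  have hEC : E ≤ C := by
    rw [hE, Submodule.span_le]
    rintro _ ⟨m, rfl⟩
    exact ((f m : ↥C)).2
  have hErank : Module.finrank F E = k - r := by
    rw [hE, finrank_span_eq_card hginj, Fintype.card_fin]
  -- every element of E vanishes on insert i R'
  have hvanish : ∀ v ∈ E, ∀ j ∈ insert i R', v j = 0 := by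
    have key : ∀ v ∈ E, ∀ j ∈ R', v j = 0 := by
      intro v hv
      have : E ≤ LinearMap.ker φ := by
        rw [hE, Submodule.span_le]
        rintro _ ⟨m, rfl⟩
        have hker : ψ (f m : ↥C) = 0 := (f m).2
        simp only [SetLike.mem_coe, LinearMap.mem_ker]
        funext j
        exact congrFun hker j
      intro j hj
      have h0 : φ v = 0 := this hv
      exact congrFun h0 ⟨j, hj⟩
    intro v hv j hj
    rcases Finset.mem_insert.mp hj with rfl | hj'
    · -- use recovery
      have hvC : v ∈ C := hEC hv
      have := hRec v hvC 0 C.zero_mem (fun j' hj' => by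
        rw [key v hv j' (hRR' hj')]; rfl)
      simpa using this
    · exact key v hv j hj'
  -- bound the support
  set S : Finset (Fin n) := insert i R' with hS
  have hScard : S.card = r + 1 := by
    rw [hS, Finset.card_insert_of_notMem hiR', hR'card]
  have hsupp : {j : Fin n | ∃ v ∈ E, v j ≠ 0} ⊆ ↑(Sᶜ) := by
    intro j hj
    obtain ⟨v, hv, hvj⟩ := hj
    rw [Finset.coe_compl]
    intro hjS
    exact hvj (hvanish v hv j hjS)
  have hncard : {j : Fin n | ∃ v ∈ E, v j ≠ 0}.ncard ≤ n - (r + 1) := by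
    calc {j : Fin n | ∃ v ∈ E, v j ≠ 0}.ncard ≤ (↑(Sᶜ) : Set (Fin n)).ncard :=
      Set.ncard_le_ncard hsupp (Set.toFinite _)
    _ = (Sᶜ).card := Set.ncard_coe_finset _
    _ = n - (r + 1) := by rw [Finset.card_compl, Fintype.card_fin, hScard]
  have hgw : gweight C (k - r) ≤ n - (r + 1) := by
    have hmem : {j : Fin n | ∃ v ∈ E, v j ≠ 0}.ncard ∈
        { w | ∃ E' : Submodule F (Fin n → F), E' ≤ C ∧ Module.finrank F E' = k - r ∧
          {i | ∃ v ∈ E', v i ≠ 0}.ncard = w } := ⟨E, hEC, hErank, rfl⟩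
    exact le_trans (Nat.sInf_le hmem) hncard
  clear * - hgw hkn hkr hr1
  omega
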